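/- Under Assumptions 1 and 2, the function v_∞: Δ(Ω) → ℝ is upper semicontinuous. -/

import Mathlib

open Filter Topology
open scoped Classical

noncomputable section

/-- Δ(Ω): beliefs, i.e. probability distributions on the finite state space Ω,
as a subspace of Ω → ℝ (its topology agrees with the total-variation one). -/
abbrev Belief (Ω : Type*) [Fintype Ω] :=
  {p : Ω → ℝ // (∀ ω, 0 ≤ p ω) ∧ ∑ ω, p ω = 1}

variable {Ω : Type*} [Fintype Ω]

/-- An element of F₀: a finite-support experiment, i.e. a finitely supported probability
distribution over beliefs (keys are the distinct posteriors p_j, values the positive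
weights λ_j). -/
structure SPExp (Ω : Type*) [Fintype Ω] where
  w : Belief Ω →₀ ℝ
  nonneg : ∀ p, 0 ≤ w p
  sum_one : ∑ p ∈ w.support, w p = 1

namespace SPExp

/-- τ(e): the support of an experiment. -/
def tau (e : SPExp Ω) : Finset (Belief Ω) := e.w.support

/-- Expectation of a real-valued function under an experiment. -/
def expect (e : SPExp Ω) (f : Belief Ω → ℝ) : ℝ := ∑ p ∈ e.w.support, e.w p * f p

/-- σ(e): the barycenter (expectation) of an experiment. -/
def sigma (e : SPExp Ω) : Belief Ω :=
  ⟨fun ω => ∑ p ∈ e.w.support, e.w p * p.val ω,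
   fun ω => Finset.sum_nonneg fun p _ => mul_nonneg (e.nonneg p) (p.2.1 ω),
   by
     calc ∑ ω, ∑ p ∈ e.w.support, e.w p * p.val ω
         = ∑ p ∈ e.w.support, ∑ ω, e.w p * p.val ω := Finset.sum_comm
       _ = ∑ p ∈ e.w.support, e.w p * ∑ ω, p.val ω := by
           refine Finset.sum_congr rfl fun p _ => ?_
           rw [Finset.mul_sum]
       _ = ∑ p ∈ e.w.support, e.w p := by
           refine Finset.sum_congr rfl fun p _ => ?_
           rw [p.2.2, mul_one]
       _ = 1 := e.sum_one⟩

/-- The trivial experiment (1, p). -/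
def triv (p : Belief Ω) : SPExp Ω where
  w := Finsupp.single p 1
  nonneg := fun q => by
    rw [Finsupp.single_apply]
    split <;> norm_num
  sum_one := by
    rw [Finsupp.support_single_ne_zero _ one_ne_zero]
    simp

end SPExp

/-- T: the set of trivial experiments. -/
def Trivials (Ω : Type*) [Fintype Ω] : Set (SPExp Ω) := Set.range SPExp.triv

/-- Weak convergence of experiments, viewed as Borel probability measures on Δ(Ω). -/
def WeakTendsto (es : ℕ → SPExp Ω) (e : SPExp Ω) : Prop :=
  ∀ f : Belief Ω → ℝ, Continuous f →
    Tendsto (fun i => (es i).expect f) atTop (𝓝 (e.expect f))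

/-- Convergence of beliefs in total variation. -/
def TVTendsto (ps : ℕ → Belief Ω) (p : Belief Ω) : Prop :=
  Tendsto (fun i => ∑ ω, |(ps i).val ω - p.val ω|) atTop (𝓝 0)

/-- Histories, most recent step first: entries are (experiment taken, realized posterior);
the starting belief is kept separately. -/
abbrev Hist (Ω : Type*) [Fintype Ω] := List (SPExp Ω × Belief Ω)

/-- last(ξ): the current belief after history ξ started at μ. -/
def lastBelief (μ : Belief Ω) : Hist Ω → Belief Ω
  | [] => μ
  | (_, p) :: _ => p

/-- Pr[ξ]: the probability of a history. -/
def histProb : Hist Ω → ℝ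
  | [] => 1
  | (e, p) :: ξ => e.w p * histProb ξ

/-- A sequential persuasion starting from μ with feasible experiments F, given by its
history-dependent choice of the next (feasible, Bayes-plausible) experiment.  An n-step
sequential persuasion is such a strategy used for n steps; an infinite sequential
persuasion is the strategy itself. -/
structure SeqP {Ω : Type*} [Fintype Ω] (F : Set (SPExp Ω)) (μ : Belief Ω) where
  next : Hist Ω → SPExp Ω
  feasible : ∀ ξ, next ξ ∈ F
  bayes : ∀ ξ, (next ξ).sigma = lastBelief μ ξ

variable {F : Set (SPExp Ω)} {μ : Belief Ω}

/-- Expectation of g over the n-step histories of S extending ξ. -/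
def histExp (S : SeqP F μ) (g : Hist Ω → ℝ) : ℕ → Hist Ω → ℝ
  | 0, ξ => g ξ
  | n + 1, ξ => (S.next ξ).expect fun p => histExp S g n ((S.next ξ, p) :: ξ)

/-- Ξ_n: the set of n-step histories of S. -/
def Hists (S : SeqP F μ) : ℕ → Set (Hist Ω)
  | 0 => {[]}
  | n + 1 => {ξ' | ∃ ξ ∈ Hists S n, ∃ p ∈ (S.next ξ).tau, ξ' = (S.next ξ, p) :: ξ}

/-- ξ padded by l trivial steps. -/
def padHist (μ : Belief Ω) (ξ : Hist Ω) (l : ℕ) : Hist Ω :=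
  List.replicate l (SPExp.triv (lastBelief μ ξ), lastBelief μ ξ) ++ ξ

/-- S terminates after ξ: all subsequent choices (along trivial continuations of ξ)
are the trivial experiment. -/
def TerminatesAfter (S : SeqP F μ) (ξ : Hist Ω) : Prop :=
  ∀ l : ℕ, S.next (padHist μ ξ l) = SPExp.triv (lastBelief μ ξ)

/-- 𝒱(S⁽ⁿ⁾) = E[v(b_n)], the expected utility of the n-step persuasion given by the
first n steps of S. -/
def stepUtility (v : Belief Ω → ℝ) (S : SeqP F μ) (n : ℕ) : ℝ :=
  histExp S (fun ξ => v (lastBelief μ ξ)) n []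

/-- Pr[S terminates after n steps]. -/
def termProb (S : SeqP F μ) (n : ℕ) : ℝ :=
  histExp S (fun ξ => if TerminatesAfter S ξ then 1 else 0) n []

/-- 𝒱(S) for an infinite sequential persuasion S. -/
def infUtility (v : Belief Ω → ℝ) (S : SeqP F μ) : ℝ :=
  ⨆ n : ℕ, histExp S (fun ξ => if TerminatesAfter S ξ then v (lastBelief μ ξ) else 0) n []

/-- Pr[b_n ∈ O] for the belief b_n induced by S after n steps. -/
def massIn (S : SeqP F μ) (O : Set (Belief Ω)) (n : ℕ) : ℝ :=
  histExp S (fun ξ => if lastBelief μ ξ ∈ O then 1 else 0) n []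

/-- v_n(p): the optimal value over n-step sequential persuasions starting from p. -/
def vN (F : Set (SPExp Ω)) (v : Belief Ω → ℝ) (n : ℕ) (p : Belief Ω) : ℝ :=
  ⨆ S : SeqP F p, stepUtility v S n

/-- v_∞(p): the optimal value over infinite sequential persuasions starting from p. -/
def vInf (F : Set (SPExp Ω)) (v : Belief Ω → ℝ) (p : Belief Ω) : ℝ :=
  ⨆ S : SeqP F p, infUtility v S

/-- Assumption 1: a uniform support bound h, and weak closedness of F. -/
def Assumption1 (F : Set (SPExp Ω)) (h : ℕ) : Prop :=
  (∀ e ∈ F, e.tau.card ≤ h) ∧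
  ∀ es : ℕ → SPExp Ω, (∀ i, es i ∈ F) → ∀ e : SPExp Ω, WeakTendsto es e → e ∈ F

/-- Shannon entropy of a belief. -/
def entropy (p : Belief Ω) : ℝ := -∑ ω, p.val ω * Real.log (p.val ω)

/-- Assumption 2: every nontrivial feasible experiment lowers expected entropy by δ. -/
def Assumption2 (F : Set (SPExp Ω)) (δ : ℝ) : Prop :=
  ∀ e ∈ F \ Trivials Ω, e.expect entropy ≤ entropy e.sigma - δ

/-- S is (effectively) an n-step sequential persuasion: after n steps it only takes
trivial experiments. -/
def IsNStep (S : SeqP F μ) (n : ℕ) : Prop :=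
  ∀ ξ : Hist Ω, n ≤ ξ.length → S.next ξ = SPExp.triv (lastBelief μ ξ)

/-- Assumption 3 at prior μ: a sequence of finite-step sequential persuasions whose
values tend to v_∞(μ) and which terminate at a uniform rate. -/
def Assumption3 (F : Set (SPExp Ω)) (v : Belief Ω → ℝ) (μ : Belief Ω) : Prop :=
  ∃ (nk : ℕ → ℕ) (Sk : ℕ → SeqP F μ),
    (∀ k, IsNStep (Sk k) (nk k)) ∧
    Tendsto (fun k => stepUtility v (Sk k) (nk k)) atTop (𝓝 (vInf F v μ)) ∧
    ∀ ε : ℝ, 0 < ε → ∃ N : ℕ, ∀ k, N ≤ nk k → 1 - ε ≤ termProb (Sk k) N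

/-- v̂: the concave closure of v (the value of unconstrained Bayesian persuasion). -/
def concaveClosure (v : Belief Ω → ℝ) (p : Belief Ω) : ℝ :=
  sSup {x : ℝ | ∃ e : SPExp Ω, e.sigma = p ∧ x = e.expect v}

/-- O is implementable for (μ, F). -/
def Implementable (F : Set (SPExp Ω)) (μ : Belief Ω) (O : Set (Belief Ω)) : Prop :=
  ∀ ε : ℝ, 0 < ε → ∃ (n : ℕ) (S : SeqP F μ), 1 - ε < massIn S O n

/-- S is a Markov sequential persuasion compatible with (μ, D, Z, ρ). -/
def MarkovCompatible (S : SeqP F μ) (D Z : Set (Belief Ω)) (ρ : Belief Ω → SPExp Ω) : Prop :=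
  ∀ ξ : Hist Ω,
    (lastBelief μ ξ ∈ D → S.next ξ = ρ (lastBelief μ ξ)) ∧
    (lastBelief μ ξ ∈ Z → S.next ξ = SPExp.triv (lastBelief μ ξ))

/-- The j-th child of vertex m at depth n of the infinite h-ary tree. -/
def treeChild {h n : ℕ} (m : Fin (h ^ n)) (j : Fin h) : Fin (h ^ (n + 1)) :=
  ⟨m.val * h + j.val, by
    have h1 : m.val + 1 ≤ h ^ n := m.isLt
    have h2 : j.val < h := j.isLt
    calc m.val * h + j.val < m.val * h + h := by omega
      _ = (m.val + 1) * h := by ring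
      _ ≤ h ^ n * h := Nat.mul_le_mul h1 le_rfl
      _ = h ^ (n + 1) := (pow_succ h n).symm⟩

/-- An h-branching sequential persuasion starting from μ. -/
structure HBranch (Ω : Type*) [Fintype Ω] (F : Set (SPExp Ω)) (h : ℕ) (μ : Belief Ω) where
  π : ∀ n : ℕ, Fin (h ^ n) → ℝ
  β : ∀ n : ℕ, Fin (h ^ n) → Belief Ω
  η : ∀ n : ℕ, Fin (h ^ n) → SPExp Ω
  π_nonneg : ∀ n m, 0 ≤ π n m
  π_sum : ∀ n : ℕ, ∑ m, π n m = 1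
  η_mem : ∀ n m, η n m ∈ F
  β_root : ∀ m, β 0 m = μ
  compat_sigma : ∀ n m, (η n m).sigma = β n m
  compat_tau : ∀ (n : ℕ) (m : Fin (h ^ n)), ∀ p ∈ (η n m).tau,
    ∃ j : Fin h, β (n + 1) (treeChild m j) = p
  consistent : ∀ (n : ℕ) (m : Fin (h ^ n)) (p : Belief Ω),
    (∑ j : Fin h, if β (n + 1) (treeChild m j) = p then π (n + 1) (treeChild m j) else 0)
      = π n m * (η n m).w p

/-- c' (at depth n + l) is a descendant of c (at depth n) in the h-ary tree. -/
def Descendant {h : ℕ} : {n : ℕ} → (l : ℕ) → Fin (h ^ n) → Fin (h ^ (n + l)) → Prop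
  | _, 0, c, c' => c = c'
  | _, l + 1, c, c' => ∃ c'' j, Descendant l c c'' ∧ c' = treeChild c'' j

namespace HBranch

variable {h : ℕ}

/-- B terminates after vertex m at depth n. -/
def TermAfter (B : HBranch Ω F h μ) (n : ℕ) (m : Fin (h ^ n)) : Prop :=
  B.η n m ∈ Trivials Ω ∧
  ∀ (l : ℕ) (c' : Fin (h ^ (n + l))), Descendant l m c' → 0 < B.π (n + l) c' →
    B.η (n + l) c' ∈ Trivials Ω

/-- Pr[B terminates after n steps]. -/
def termProb (B : HBranch Ω F h μ) (n : ℕ) : ℝ :=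
  ∑ m : Fin (h ^ n), if B.TermAfter n m then B.π n m else 0

end HBranch

/-- B represents the infinite sequential persuasion S (via maps r_n : C_n → Ξ_n). -/
def Represents (S : SeqP F μ) {h : ℕ} (B : HBranch Ω F h μ) : Prop :=
  ∃ r : ∀ n : ℕ, Fin (h ^ n) → Hist Ω,
    ∀ n : ℕ,
      (∀ c, r n c ∈ Hists S n) ∧
      (∀ ξ ∈ Hists S n, histProb ξ = ∑ c, if r n c = ξ then B.π n c else 0) ∧
      (∀ c, lastBelief μ (r n c) = B.β n c ∧ S.next (r n c) = B.η n c) ∧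
      (∀ l : ℕ, ∀ ξ ∈ Hists S n, ∀ ξ' ∈ Hists S (n + l),
        (ξ <:+ ξ' ↔
          ∀ c' : Fin (h ^ (n + l)), r (n + l) c' = ξ' →
            ∃ c : Fin (h ^ n), r n c = ξ ∧ Descendant l c c'))

/-- The number of nontrivial experiments taken along a history. -/
def nontrivCount (ξ : Hist Ω) : ℕ :=
  ξ.countP fun s => decide (s.1 ∉ Trivials Ω)

end

noncomputable section AuxProof
open Filter Topology

variable {Ω : Type*} [Fintype Ω]

namespace SPExp

lemma expect_triv (q : Belief Ω) (f : Belief Ω → ℝ) : (triv q).expect f = f q := by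
  unfold expect triv
  rw [Finsupp.support_single_ne_zero _ one_ne_zero]
  simp

lemma sigma_apply (e : SPExp Ω) (ω : Ω) :
    (e.sigma).val ω = e.expect (fun r => r.val ω) := rfl

lemma sigma_triv (q : Belief Ω) : (triv q).sigma = q := by
  apply Subtype.ext; funext ω
  rw [sigma_apply, expect_triv]

lemma expect_mono {e : SPExp Ω} {f g : Belief Ω → ℝ}
    (h : ∀ p ∈ e.w.support, f p ≤ g p) : e.expect f ≤ e.expect g :=
  Finset.sum_le_sum fun p hp => mul_le_mul_of_nonneg_left (h p hp) (e.nonneg p)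

lemma expect_const (e : SPExp Ω) (c : ℝ) : e.expect (fun _ => c) = c := by
  unfold expect
  rw [← Finset.sum_mul, e.sum_one, one_mul]

lemma expect_add (e : SPExp Ω) (f g : Belief Ω → ℝ) :
    e.expect (fun p => f p + g p) = e.expect f + e.expect g := by
  unfold expect
  rw [← Finset.sum_add_distrib]
  exact Finset.sum_congr rfl fun p _ => by ring

lemma expect_smul (e : SPExp Ω) (c : ℝ) (f : Belief Ω → ℝ) :
    e.expect (fun p => c * f p) = c * e.expect f := by
  unfold expect
  rw [Finset.mul_sum]
  exact Finset.sum_congr rfl fun p _ => by ring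

lemma expect_le {e : SPExp Ω} {f : Belief Ω → ℝ} {C : ℝ} (h : ∀ p, f p ≤ C) :
    e.expect f ≤ C := by
  calc e.expect f ≤ e.expect (fun _ => C) := expect_mono fun p _ => h p
    _ = C := expect_const e C

lemma le_expect {e : SPExp Ω} {f : Belief Ω → ℝ} {C : ℝ} (h : ∀ p, C ≤ f p) :
    C ≤ e.expect f := by
  calc C = e.expect (fun _ => C) := (expect_const e C).symm
    _ ≤ e.expect f := expect_mono fun p _ => h p

lemma eq_triv_of_mem_trivials {e : SPExp Ω} (he : e ∈ Trivials Ω) :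
    e = triv e.sigma := by
  obtain ⟨r, rfl⟩ := he
  rw [sigma_triv]

lemma finsupp_sum_eq (w : Belief Ω →₀ ℝ) (g : Belief Ω → ℝ → ℝ) :
    ∑ p ∈ w.support, g p (w p) = w.sum g := rfl

variable {h : ℕ}

def mkExp (lam : Fin h → ℝ) (q : Fin h → Belief Ω)
    (h0 : ∀ j, 0 ≤ lam j) (h1 : ∑ j, lam j = 1) : SPExp Ω where
  w := ∑ j, Finsupp.single (q j) (lam j)
  nonneg := fun p => by
    rw [Finsupp.finset_sum_apply]
    exact Finset.sum_nonneg fun j _ => by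
      rw [Finsupp.single_apply]; split <;> simp [h0 j]
  sum_one := by
    rw [show (∑ p ∈ (∑ j, Finsupp.single (q j) (lam j)).support,
        (∑ j, Finsupp.single (q j) (lam j)) p)
      = (∑ j, Finsupp.single (q j) (lam j)).sum (fun _ x => x) from rfl]
    rw [← Finsupp.sum_finset_sum_index (fun p => rfl) (fun p x y => rfl)]
    rw [← h1]
    refine Finset.sum_congr rfl fun j _ => ?_
    exact Finsupp.sum_single_index rfl

lemma mkExp_expect (lam : Fin h → ℝ) (q : Fin h → Belief Ω)
    (h0 : ∀ j, 0 ≤ lam j) (h1 : ∑ j, lam j = 1) (f : Belief Ω → ℝ) :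
    (mkExp lam q h0 h1).expect f = ∑ j, lam j * f (q j) := by
  show (∑ j, Finsupp.single (q j) (lam j)).sum (fun p x => x * f p) = _
  rw [← Finsupp.sum_finset_sum_index (fun p => by simp) (fun p x y => by ring)]
  refine Finset.sum_congr rfl fun j _ => ?_
  exact Finsupp.sum_single_index (by simp)

lemma w_le_one (e : SPExp Ω) (p : Belief Ω) : e.w p ≤ 1 := by
  by_cases hp : p ∈ e.w.support
  · rw [← e.sum_one]
    exact Finset.single_le_sum (fun q _ => e.nonneg q) hp
  · rw [Finsupp.notMem_support_iff.1 hp]; norm_num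

end SPExp

lemma sum_fin_pad {α : Type*} (l : List α) (g : α → ℝ) {h : ℕ} (hl : l.length ≤ h) :
    (∑ j : Fin h, if hj : (j : ℕ) < l.length then g (l.get ⟨j, hj⟩) else 0)
      = (l.map g).sum := by
  rw [Fin.sum_univ_eq_sum_range (fun j => if hj : j < l.length then g (l.get ⟨j, hj⟩) else 0) h]
  rw [← Finset.sum_subset (Finset.range_subset_range.2 hl)
    (fun x _ hx => dif_neg (by simpa using hx))]
  rw [← Fin.sum_univ_eq_sum_range
    (fun j => if hj : j < l.length then g (l.get ⟨j, hj⟩) else 0) l.length]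
  rw [← Fin.sum_univ_fun_getElem l g]
  refine Finset.sum_congr rfl fun i _ => ?_
  rw [dif_pos i.isLt]
  congr 1

namespace SPExp

lemma exists_tuple (e : SPExp Ω) {h : ℕ} (hcard : e.w.support.card ≤ h) (d : Belief Ω) :
    ∃ (lam : Fin h → ℝ) (q : Fin h → Belief Ω), (∀ j, 0 ≤ lam j) ∧ (∑ j, lam j = 1) ∧
      (∀ j, lam j ≤ 1) ∧
      ∀ f : Belief Ω → ℝ, e.expect f = ∑ j, lam j * f (q j) := by
  set l := e.w.support.toList with hldef
  have hlen : l.length ≤ h := by rw [hldef, Finset.length_toList]; exact hcard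
  refine ⟨fun j => if hj : (j : ℕ) < l.length then e.w (l.get ⟨j, hj⟩) else 0,
          fun j => if hj : (j : ℕ) < l.length then l.get ⟨j, hj⟩ else d, ?_, ?_, ?_, ?_⟩
  · intro j; by_cases hj : (j : ℕ) < l.length <;> simp [hj, e.nonneg]
  · rw [sum_fin_pad l e.w hlen, Finset.sum_map_toList, e.sum_one]
  · intro j; by_cases hj : (j : ℕ) < l.length <;> simp [hj, e.w_le_one]
  · intro f
    have : (∑ j : Fin h, (if hj : (j : ℕ) < l.length then e.w (l.get ⟨j, hj⟩) else 0) *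
        f (if hj : (j : ℕ) < l.length then l.get ⟨j, hj⟩ else d))
        = ∑ j : Fin h, if hj : (j : ℕ) < l.length
            then (fun p => e.w p * f p) (l.get ⟨j, hj⟩) else 0 := by
      refine Finset.sum_congr rfl fun j _ => ?_
      by_cases hj : (j : ℕ) < l.length <;> simp [hj]
    rw [this, sum_fin_pad l (fun p => e.w p * f p) hlen, Finset.sum_map_toList]
    rfl

end SPExp

section Cpt
variable (Ω)

lemma belief_isCompact :
    IsCompact {p : Ω → ℝ | (∀ ω, 0 ≤ p ω) ∧ ∑ ω, p ω = 1} := by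
  refine IsCompact.of_isClosed_subset
    (isCompact_univ_pi fun _ : Ω => isCompact_Icc (a := (0:ℝ)) (b := 1)) ?_ ?_
  · have h1 : IsClosed {p : Ω → ℝ | ∀ ω, 0 ≤ p ω} := by
      have : {p : Ω → ℝ | ∀ ω, 0 ≤ p ω} = ⋂ ω, {p : Ω → ℝ | 0 ≤ p ω} := by
        ext p; simp
      rw [this]
      exact isClosed_iInter fun ω => isClosed_le continuous_const (continuous_apply ω)
    have h2 : IsClosed {p : Ω → ℝ | ∑ ω, p ω = 1} :=
      isClosed_eq (by continuity) continuous_const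
    have : {p : Ω → ℝ | (∀ ω, 0 ≤ p ω) ∧ ∑ ω, p ω = 1}
        = {p : Ω → ℝ | ∀ ω, 0 ≤ p ω} ∩ {p : Ω → ℝ | ∑ ω, p ω = 1} := rfl
    rw [this]
    exact h1.inter h2
  · rintro p ⟨h0, h1⟩ ω _
    refine ⟨h0 ω, ?_⟩
    rw [← h1]
    exact Finset.single_le_sum (fun q _ => h0 q) (Finset.mem_univ ω)

instance : CompactSpace (Belief Ω) :=
  isCompact_iff_compactSpace.1 (belief_isCompact Ω)

instance [Nonempty Ω] : Inhabited (Belief Ω) :=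
  ⟨⟨fun _ => (Fintype.card Ω : ℝ)⁻¹,
    fun _ => by positivity,
    by
      rw [Finset.sum_const, nsmul_eq_mul]
      rw [Finset.card_univ]
      exact mul_inv_cancel₀ (by exact_mod_cast Fintype.card_ne_zero)⟩⟩

lemma belief_le_one (p : Belief Ω) (ω : Ω) : p.val ω ≤ 1 := by
  have h := Finset.single_le_sum (f := fun q => p.val q) (fun q _ => p.2.1 q) (Finset.mem_univ ω)
  rw [p.2.2] at h
  exact h

end Cpt

section Entropy
variable {Ω : Type*} [Fintype Ω]

lemma entropy_nonneg (p : Belief Ω) : 0 ≤ entropy p := by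
  unfold entropy
  rw [neg_nonneg]
  refine Finset.sum_nonpos fun ω _ => ?_
  rcases eq_or_lt_of_le (p.2.1 ω) with h0 | h0
  · rw [← h0]; norm_num
  · exact mul_nonpos_of_nonneg_of_nonpos (le_of_lt h0)
      (Real.log_nonpos (le_of_lt h0) (belief_le_one Ω p ω))

lemma entropy_le_log (p : Belief Ω) [Nonempty Ω] :
    entropy p ≤ Real.log (Fintype.card Ω) := by
  have hcard : (0:ℝ) < (Fintype.card Ω : ℝ) := by
    exact_mod_cast Fintype.card_pos
  have key : ∀ ω : Ω, p.val ω - (Fintype.card Ω : ℝ)⁻¹ ≤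
      p.val ω * (Real.log (Fintype.card Ω) + Real.log (p.val ω)) := by
    intro ω
    rcases eq_or_lt_of_le (p.2.1 ω) with h0 | h0
    · rw [← h0]
      simp only [zero_mul, sub_nonpos]
      positivity
    · have hx : (0:ℝ) < (Fintype.card Ω : ℝ) * p.val ω := by positivity
      have hlog : Real.log (((Fintype.card Ω : ℝ) * p.val ω)⁻¹) ≤
          ((Fintype.card Ω : ℝ) * p.val ω)⁻¹ - 1 :=
        Real.log_le_sub_one_of_pos (by positivity)
      rw [Real.log_inv] at hlog
      have hlogsum : Real.log ((Fintype.card Ω : ℝ) * p.val ω)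
          = Real.log (Fintype.card Ω) + Real.log (p.val ω) :=
        Real.log_mul (ne_of_gt hcard) (ne_of_gt h0)
      have h2 : 1 - ((Fintype.card Ω : ℝ) * p.val ω)⁻¹ ≤
          Real.log (Fintype.card Ω) + Real.log (p.val ω) := by
        rw [← hlogsum]; linarith
      have h3 := mul_le_mul_of_nonneg_left h2 (le_of_lt h0)
      have h4 : p.val ω * (1 - ((Fintype.card Ω : ℝ) * p.val ω)⁻¹)
          = p.val ω - (Fintype.card Ω : ℝ)⁻¹ := by
        rw [mul_sub, mul_one, mul_inv, ← mul_assoc]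
        rw [mul_comm (p.val ω) ((Fintype.card Ω : ℝ))⁻¹, mul_assoc]
        rw [mul_inv_cancel₀ (ne_of_gt h0), mul_one]
      rw [h4] at h3
      exact h3
  have hsum := Finset.sum_le_sum (fun ω (_ : ω ∈ Finset.univ) => key ω)
  have hL : ∑ ω, (p.val ω - (Fintype.card Ω : ℝ)⁻¹) = 0 := by
    rw [Finset.sum_sub_distrib, p.2.2, Finset.sum_const, Finset.card_univ, nsmul_eq_mul]
    rw [mul_inv_cancel₀ (ne_of_gt hcard)]
    ring
  have hR : ∑ ω, p.val ω * (Real.log (Fintype.card Ω) + Real.log (p.val ω))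
      = Real.log (Fintype.card Ω) - entropy p := by
    unfold entropy
    have : ∀ ω : Ω, p.val ω * (Real.log (Fintype.card Ω) + Real.log (p.val ω))
        = Real.log (Fintype.card Ω) * p.val ω + p.val ω * Real.log (p.val ω) :=
      fun ω => by ring
    rw [Finset.sum_congr rfl fun ω _ => this ω, Finset.sum_add_distrib,
      ← Finset.mul_sum, p.2.2, mul_one]
    ring
  rw [hL, hR] at hsum
  linarith

end Entropy

section HistM
variable {Ω : Type*} [Fintype Ω] {F : Set (SPExp Ω)} {μ ν : Belief Ω}

lemma histExp_zero (S : SeqP F μ) (g : Hist Ω → ℝ) (ξ : Hist Ω) :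
    histExp S g 0 ξ = g ξ := rfl

lemma histExp_succ (S : SeqP F μ) (g : Hist Ω → ℝ) (n : ℕ) (ξ : Hist Ω) :
    histExp S g (n + 1) ξ
      = (S.next ξ).expect fun p => histExp S g n ((S.next ξ, p) :: ξ) := rfl

lemma histExp_mono {S : SeqP F μ} {g1 g2 : Hist Ω → ℝ} (h : ∀ ζ, g1 ζ ≤ g2 ζ) :
    ∀ n ξ, histExp S g1 n ξ ≤ histExp S g2 n ξ := by
  intro n
  induction n with
  | zero => exact fun ξ => h ξ
  | succ n ih =>
    intro ξ
    rw [histExp_succ, histExp_succ]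
    exact SPExp.expect_mono fun p _ => ih _

lemma histExp_le {S : SeqP F μ} {g : Hist Ω → ℝ} {C : ℝ} (h : ∀ ζ, g ζ ≤ C) :
    ∀ n ξ, histExp S g n ξ ≤ C := by
  intro n
  induction n with
  | zero => exact fun ξ => h ξ
  | succ n ih =>
    intro ξ
    rw [histExp_succ]
    exact SPExp.expect_le fun p => ih _

lemma le_histExp {S : SeqP F μ} {g : Hist Ω → ℝ} {C : ℝ} (h : ∀ ζ, C ≤ g ζ) :
    ∀ n ξ, C ≤ histExp S g n ξ := by
  intro n
  induction n with
  | zero => exact fun ξ => h ξ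
  | succ n ih =>
    intro ξ
    rw [histExp_succ]
    exact SPExp.le_expect fun p => ih _

lemma histExp_add (S : SeqP F μ) (g1 g2 : Hist Ω → ℝ) :
    ∀ n ξ, histExp S (fun ζ => g1 ζ + g2 ζ) n ξ
      = histExp S g1 n ξ + histExp S g2 n ξ := by
  intro n
  induction n with
  | zero => exact fun ξ => rfl
  | succ n ih =>
    intro ξ
    rw [histExp_succ, histExp_succ, histExp_succ, ← SPExp.expect_add]
    exact congrArg _ (funext fun p => ih _)

lemma histExp_smul (S : SeqP F μ) (c : ℝ) (g : Hist Ω → ℝ) :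
    ∀ n ξ, histExp S (fun ζ => c * g ζ) n ξ = c * histExp S g n ξ := by
  intro n
  induction n with
  | zero => exact fun ξ => rfl
  | succ n ih =>
    intro ξ
    rw [histExp_succ, histExp_succ, ← SPExp.expect_smul]
    exact congrArg _ (funext fun p => ih _)

lemma histExp_congr_next {S₁ : SeqP F μ} {S₂ : SeqP F ν} (g : Hist Ω → ℝ) :
    ∀ n ξ, (∀ ζ : Hist Ω, ζ.length < n + ξ.length → S₁.next ζ = S₂.next ζ) →
      histExp S₁ g n ξ = histExp S₂ g n ξ := by
  intro n
  induction n with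
  | zero => exact fun ξ _ => rfl
  | succ n ih =>
    intro ξ hagree
    rw [histExp_succ, histExp_succ]
    have hx : S₁.next ξ = S₂.next ξ := hagree ξ (by omega)
    rw [← hx]
    refine congrArg _ (funext fun p => ih ((S₁.next ξ, p) :: ξ) (fun ζ hζ => hagree ζ ?_))
    simp only [List.length_cons] at hζ ⊢
    omega

lemma histExp_congr_g {S : SeqP F μ} {g1 g2 : Hist Ω → ℝ} :
    ∀ n ξ, (∀ ζ : Hist Ω, ζ.length = n + ξ.length → g1 ζ = g2 ζ) →
      histExp S g1 n ξ = histExp S g2 n ξ := by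
  intro n
  induction n with
  | zero => exact fun ξ h => h ξ (by omega)
  | succ n ih =>
    intro ξ h
    rw [histExp_succ, histExp_succ]
    exact congrArg _ (funext fun p => ih ((S.next ξ, p) :: ξ)
      (fun ζ hζ => h ζ (by simp only [List.length_cons] at hζ ⊢; omega)))

lemma lastBelief_append (p : Belief Ω) (ζ : Hist Ω) (s : SPExp Ω × Belief Ω) :
    lastBelief p (ζ ++ [s]) = lastBelief s.2 ζ := by
  cases ζ <;> rfl

def SeqP.shift (S : SeqP F μ) (s : SPExp Ω × Belief Ω) : SeqP F s.2 where
  next ξ := S.next (ξ ++ [s])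
  feasible ξ := S.feasible _
  bayes ξ := by rw [S.bayes]; exact lastBelief_append μ ξ s

lemma histExp_shift (S : SeqP F μ) (s : SPExp Ω × Belief Ω) (g : Hist Ω → ℝ) :
    ∀ n ξ, histExp S g n (ξ ++ [s])
      = histExp (S.shift s) (fun ζ => g (ζ ++ [s])) n ξ := by
  intro n
  induction n with
  | zero => exact fun ξ => rfl
  | succ n ih =>
    intro ξ
    rw [histExp_succ, histExp_succ]
    have hnext : (S.shift s).next ξ = S.next (ξ ++ [s]) := rfl
    rw [hnext]
    refine congrArg _ (funext fun p => ?_)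
    have : (S.next (ξ ++ [s]), p) :: (ξ ++ [s]) = ((S.next (ξ ++ [s]), p) :: ξ) ++ [s] := rfl
    rw [this, ih]

def trivSeq (hTF : Trivials Ω ⊆ F) (μ : Belief Ω) : SeqP F μ where
  next ξ := SPExp.triv (lastBelief μ ξ)
  feasible ξ := hTF ⟨_, rfl⟩
  bayes ξ := SPExp.sigma_triv _

lemma seqP_nonempty (hTF : Trivials Ω ⊆ F) (μ : Belief Ω) : Nonempty (SeqP F μ) :=
  ⟨trivSeq hTF μ⟩

end HistM

section VN
variable {Ω : Type*} [Fintype Ω] {F : Set (SPExp Ω)} {μ : Belief Ω}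
variable {v : Belief Ω → ℝ} {Vlo Vhi : ℝ}

lemma stepUtility_le (hvhi : ∀ p, v p ≤ Vhi) (S : SeqP F μ) (n : ℕ) :
    stepUtility v S n ≤ Vhi :=
  histExp_le (fun ζ => hvhi _) n []

lemma le_stepUtility (hvlo : ∀ p, Vlo ≤ v p) (S : SeqP F μ) (n : ℕ) :
    Vlo ≤ stepUtility v S n :=
  le_histExp (fun ζ => hvlo _) n []

lemma bddAbove_step (hvhi : ∀ p, v p ≤ Vhi) (n : ℕ) :
    BddAbove (Set.range fun S : SeqP F μ => stepUtility v S n) := by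
  refine ⟨Vhi, ?_⟩
  rintro x ⟨S, rfl⟩
  exact stepUtility_le hvhi S n

lemma vN_le (hTF : Trivials Ω ⊆ F) (hvhi : ∀ p, v p ≤ Vhi) (n : ℕ) (p : Belief Ω) :
    vN F v n p ≤ Vhi := by
  have := seqP_nonempty hTF p
  exact ciSup_le fun S => stepUtility_le hvhi S n

lemma le_vN (hTF : Trivials Ω ⊆ F) (hvhi : ∀ p, v p ≤ Vhi) (hvlo : ∀ p, Vlo ≤ v p)
    (n : ℕ) (p : Belief Ω) : Vlo ≤ vN F v n p :=
  le_ciSup_of_le (bddAbove_step hvhi n) (trivSeq hTF p) (le_stepUtility hvlo _ n)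

lemma stepUtility_le_vN (hvhi : ∀ p, v p ≤ Vhi) (S : SeqP F μ) (n : ℕ) :
    stepUtility v S n ≤ vN F v n μ :=
  le_ciSup (bddAbove_step hvhi n) S

lemma vN_zero (hTF : Trivials Ω ⊆ F) (p : Belief Ω) : vN F v 0 p = v p := by
  have := seqP_nonempty hTF p
  exact ciSup_const

/-- truncation of a strategy at length n -/
def SeqP.truncLen (S : SeqP F μ) (hTF : Trivials Ω ⊆ F) (n : ℕ) : SeqP F μ where
  next ξ := if ξ.length < n then S.next ξ else SPExp.triv (lastBelief μ ξ)
  feasible ξ := by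
    by_cases hl : ξ.length < n
    · simpa [hl] using S.feasible ξ
    · simpa [hl] using hTF ⟨_, rfl⟩
  bayes ξ := by
    by_cases hl : ξ.length < n
    · simpa [hl] using S.bayes ξ
    · simpa [hl] using SPExp.sigma_triv _

lemma histExp_succ_of_triv {S : SeqP F μ} :
    ∀ n ξ, (∀ ζ : Hist Ω, n + ξ.length ≤ ζ.length →
        S.next ζ = SPExp.triv (lastBelief μ ζ)) →
      histExp S (fun ζ => v (lastBelief μ ζ)) (n + 1) ξ
        = histExp S (fun ζ => v (lastBelief μ ζ)) n ξ := by
  intro n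
  induction n with
  | zero =>
    intro ξ htr
    rw [histExp_succ, htr ξ (by omega), SPExp.expect_triv]
    rfl
  | succ n ih =>
    intro ξ htr
    rw [histExp_succ (n := n + 1), histExp_succ (n := n)]
    refine congrArg _ (funext fun p => ih ((S.next ξ, p) :: ξ) (fun ζ hζ => htr ζ ?_))
    simp only [List.length_cons] at hζ ⊢
    omega

lemma stepUtility_trunc (hTF : Trivials Ω ⊆ F) (S : SeqP F μ) (n : ℕ) :
    stepUtility v S n = stepUtility v (S.truncLen hTF n) n := by
  refine histExp_congr_next _ n [] (fun ζ hζ => ?_)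
  simp only [List.length_nil, Nat.add_zero] at hζ
  simp [SeqP.truncLen, hζ]

lemma vN_succ_mono (hTF : Trivials Ω ⊆ F) (hvhi : ∀ p, v p ≤ Vhi) (n : ℕ) (p : Belief Ω) :
    vN F v n p ≤ vN F v (n + 1) p := by
  have hne := seqP_nonempty hTF p
  refine ciSup_le fun S => ?_
  refine le_ciSup_of_le (bddAbove_step hvhi (n + 1)) (S.truncLen hTF n) ?_
  rw [show stepUtility v (S.truncLen hTF n) (n+1) = stepUtility v (S.truncLen hTF n) n from
    histExp_succ_of_triv n [] (fun ζ hζ => by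
      simp only [List.length_nil, Nat.add_zero] at hζ
      simp [SeqP.truncLen, Nat.not_lt.2 hζ])]
  rw [← stepUtility_trunc hTF S n]

lemma vN_mono (hTF : Trivials Ω ⊆ F) (hvhi : ∀ p, v p ≤ Vhi) {m n : ℕ} (hmn : m ≤ n)
    (p : Belief Ω) : vN F v m p ≤ vN F v n p := by
  induction n with
  | zero => rw [Nat.le_zero.1 hmn]
  | succ n ih =>
    rcases Nat.lt_or_ge m (n+1) with hlt | hge
    · exact le_trans (ih (by omega)) (vN_succ_mono hTF hvhi n p)
    · rw [show m = n + 1 by omega]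

/-- Bellman inequality ≤ -/
lemma stepUtility_succ_le (hvhi : ∀ p, v p ≤ Vhi) (S : SeqP F μ) (n : ℕ) :
    stepUtility v S (n + 1) ≤ (S.next []).expect (vN F v n) := by
  rw [show stepUtility v S (n+1)
    = (S.next []).expect (fun q => histExp S (fun ζ => v (lastBelief μ ζ)) n
        [(S.next [], q)]) from rfl]
  refine SPExp.expect_mono fun q _ => ?_
  have h1 : ([] : Hist Ω) ++ [(S.next [], q)] = [(S.next [], q)] := rfl
  rw [← h1, histExp_shift]
  have h2 : (fun ζ => v (lastBelief μ (ζ ++ [(S.next [], q)])))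
      = fun ζ => v (lastBelief q ζ) := funext fun ζ => by rw [lastBelief_append]
  rw [h2]
  exact stepUtility_le_vN hvhi (S.shift (S.next [], q)) n

/-- gluing a first experiment with continuation strategies -/
def SeqP.glue {e : SPExp Ω} {p : Belief Ω} (heF : e ∈ F) (hep : e.sigma = p)
    (T : ∀ q : Belief Ω, SeqP F q) : SeqP F p where
  next ξ := (ξ.getLast?).elim e (fun s => (T s.2).next ξ.dropLast)
  feasible ξ := by
    cases hx : ξ.getLast? with
    | none => simpa [hx, Option.elim] using heF
    | some s => simpa [hx, Option.elim] using (T s.2).feasible ξ.dropLast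
  bayes ξ := by
    induction ξ using List.reverseRecOn with
    | nil => simpa [lastBelief] using hep
    | append_singleton ζ s _ =>
      have hx : (ζ ++ [s]).getLast? = some s := List.getLast?_concat
      simp only [hx, Option.elim, List.dropLast_concat]
      rw [(T s.2).bayes ζ, lastBelief_append]

lemma SeqP.glue_next_concat {e : SPExp Ω} {p : Belief Ω} (heF : e ∈ F) (hep : e.sigma = p)
    (T : ∀ q : Belief Ω, SeqP F q) (ζ : Hist Ω) (s : SPExp Ω × Belief Ω) :
    (SeqP.glue heF hep T).next (ζ ++ [s]) = (T s.2).next ζ := by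
  show ((ζ ++ [s]).getLast?).elim e (fun s' => (T s'.2).next (ζ ++ [s]).dropLast)
      = (T s.2).next ζ
  rw [List.getLast?_concat]
  simp only [Option.elim, List.dropLast_concat]

/-- Bellman inequality ≥ -/
lemma expect_vN_le (hTF : Trivials Ω ⊆ F) (hvhi : ∀ p, v p ≤ Vhi)
    {e : SPExp Ω} (heF : e ∈ F) {p : Belief Ω} (hep : e.sigma = p) (n : ℕ) :
    e.expect (vN F v n) ≤ vN F v (n + 1) p := by
  refine le_of_forall_pos_le_add fun ε hε => ?_
  have hch : ∀ q : Belief Ω, ∃ T : SeqP F q, vN F v n q - ε < stepUtility v T n := by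
    intro q
    have hne := seqP_nonempty hTF q
    exact exists_lt_of_lt_ciSup (sub_lt_self _ hε)
  choose T hT using hch
  let G : SeqP F p := SeqP.glue heF hep T
  have hG0 : G.next [] = e := rfl
  have hval : ∀ q : Belief Ω, histExp G (fun ζ => v (lastBelief p ζ)) n [(e, q)]
      = stepUtility v (T q) n := by
    intro q
    have h1 : ([] : Hist Ω) ++ [(e, q)] = [(e, q)] := rfl
    rw [← h1, histExp_shift]
    have h2 : (fun ζ => v (lastBelief p (ζ ++ [(e, q)])))
        = fun ζ => v (lastBelief q ζ) := funext fun ζ => by rw [lastBelief_append]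
    rw [h2]
    refine histExp_congr_next _ n [] (fun ζ _ => ?_)
    show G.next (ζ ++ [(e, q)]) = (T q).next ζ
    exact SeqP.glue_next_concat heF hep T ζ (e, q)
  have hstep : stepUtility v G (n + 1)
      = e.expect fun q => stepUtility v (T q) n := by
    rw [show stepUtility v G (n+1)
      = (G.next []).expect (fun q => histExp G (fun ζ => v (lastBelief p ζ)) n
          [(G.next [], q)]) from rfl]
    rw [hG0]
    exact congrArg _ (funext fun q => hval q)
  have h3 : e.expect (vN F v n) - ε ≤ stepUtility v G (n + 1) := by
    rw [hstep]
    have : e.expect (vN F v n) - ε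
        = e.expect (fun q => vN F v n q + (-ε)) := by
      rw [SPExp.expect_add, SPExp.expect_const]; ring
    rw [this]
    exact SPExp.expect_mono fun q _ => by
      have := hT q; linarith
  have h4 := stepUtility_le_vN hvhi G (n + 1)
  linarith

end VN

section Cap
variable {Ω : Type*} [Fintype Ω] {F : Set (SPExp Ω)} {μ : Belief Ω}
variable {v : Belief Ω → ℝ} {Vlo Vhi : ℝ}

lemma nontrivCount_nil : nontrivCount ([] : Hist Ω) = 0 := rfl

lemma nontrivCount_cons (s : SPExp Ω × Belief Ω) (ξ : Hist Ω) :
    nontrivCount (s :: ξ)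
      = nontrivCount ξ + (if s.1 ∈ Trivials Ω then 0 else 1) := by
  unfold nontrivCount
  rw [List.countP_cons]
  by_cases hs : s.1 ∈ Trivials Ω <;> simp [hs]

lemma nontrivCount_cons_le (s : SPExp Ω × Belief Ω) (ξ : Hist Ω) :
    nontrivCount ξ ≤ nontrivCount (s :: ξ) := by
  rw [nontrivCount_cons]; omega

/-- Entropy descent under Assumption 2. -/
lemma histExp_entropy {δ : ℝ} (hA2 : Assumption2 F δ) (S : SeqP F μ) :
    ∀ n ξ, histExp S (fun ζ => entropy (lastBelief μ ζ) + δ * nontrivCount ζ) n ξ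
      ≤ entropy (lastBelief μ ξ) + δ * nontrivCount ξ := by
  intro n
  induction n with
  | zero => exact fun ξ => le_refl _
  | succ n ih =>
    intro ξ
    rw [histExp_succ]
    set e := S.next ξ with he
    have hstep : e.expect (fun q => histExp S
        (fun ζ => entropy (lastBelief μ ζ) + δ * nontrivCount ζ) n ((e, q) :: ξ))
        ≤ e.expect (fun q => entropy q
            + δ * nontrivCount ((e, q) :: ξ)) := by
      refine SPExp.expect_mono fun q _ => ?_
      have := ih ((e, q) :: ξ)
      simpa [lastBelief] using this
    refine le_trans hstep ?_
    by_cases htr : e ∈ Trivials Ω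
    · have hcnt : ∀ q : Belief Ω, (nontrivCount ((e, q) :: ξ) : ℝ) = nontrivCount ξ := by
        intro q; rw [nontrivCount_cons]; simp [htr]
      have : (e.expect fun q => entropy q + δ * nontrivCount ((e, q) :: ξ))
          = e.expect fun q => entropy q + δ * nontrivCount ξ := by
        exact congrArg _ (funext fun q => by rw [hcnt q])
      rw [this, SPExp.expect_add, SPExp.expect_const]
      have he2 : e = SPExp.triv (lastBelief μ ξ) := by
        have := SPExp.eq_triv_of_mem_trivials htr
        rwa [S.bayes ξ] at this
      rw [he2, SPExp.expect_triv]
    · have hcnt : ∀ q : Belief Ω, (nontrivCount ((e, q) :: ξ) : ℝ)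
          = nontrivCount ξ + 1 := by
        intro q; rw [nontrivCount_cons]; simp [htr]
      have : (e.expect fun q => entropy q + δ * nontrivCount ((e, q) :: ξ))
          = e.expect fun q => entropy q + δ * (nontrivCount ξ + 1) := by
        exact congrArg _ (funext fun q => by rw [hcnt q])
      rw [this, SPExp.expect_add, SPExp.expect_const]
      have hent : e.expect entropy ≤ entropy e.sigma - δ :=
        hA2 e ⟨S.feasible ξ, htr⟩
      rw [S.bayes ξ] at hent
      have : entropy (lastBelief μ ξ) + δ * nontrivCount ξ
          = (entropy (lastBelief μ ξ) - δ) + δ * (nontrivCount ξ + 1) := by ring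
      rw [this]
      exact add_le_add_left hent _

lemma histExp_count_le {δ : ℝ} (hδ : 0 < δ) (hA2 : Assumption2 F δ) (S : SeqP F μ)
    (n : ℕ) : histExp S (fun ζ => δ * nontrivCount ζ) n [] ≤ entropy μ := by
  have h1 := histExp_entropy hA2 S n []
  rw [histExp_add] at h1
  have h2 : (0:ℝ) ≤ histExp S (fun ζ => entropy (lastBelief μ ζ)) n [] :=
    le_histExp (fun ζ => entropy_nonneg _) n []
  simp only [nontrivCount_nil, Nat.cast_zero, mul_zero, add_zero] at h1
  have h3 : lastBelief μ ([] : Hist Ω) = μ := rfl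
  rw [h3] at h1
  linarith

/-- capping a strategy at K nontrivial steps -/
def SeqP.capCount (S : SeqP F μ) (hTF : Trivials Ω ⊆ F) (K : ℕ) : SeqP F μ where
  next ξ := if nontrivCount ξ < K then S.next ξ else SPExp.triv (lastBelief μ ξ)
  feasible ξ := by
    by_cases hl : nontrivCount ξ < K
    · simpa [hl] using S.feasible ξ
    · simpa [hl] using hTF ⟨_, rfl⟩
  bayes ξ := by
    by_cases hl : nontrivCount ξ < K
    · simpa [hl] using S.bayes ξ
    · simpa [hl] using SPExp.sigma_triv _

lemma histExp_capzero {S : SeqP F μ} {K : ℕ} :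
    ∀ n ξ, K < nontrivCount ξ →
      histExp S (fun ζ => if nontrivCount ζ ≤ K then v (lastBelief μ ζ) else 0) n ξ
        = 0 := by
  intro n
  induction n with
  | zero =>
    intro ξ hK
    rw [histExp_zero, if_neg (by omega)]
  | succ n ih =>
    intro ξ hK
    rw [histExp_succ]
    have : (fun p => histExp S
        (fun ζ => if nontrivCount ζ ≤ K then v (lastBelief μ ζ) else 0) n
        ((S.next ξ, p) :: ξ)) = fun _ => (0:ℝ) := by
      refine funext fun p => ih _ ?_
      exact lt_of_lt_of_le hK (nontrivCount_cons_le _ _)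
    rw [this, SPExp.expect_const]

lemma histExp_le_cap (hTF : Trivials Ω ⊆ F) (hv0 : ∀ p, 0 ≤ v p)
    (S : SeqP F μ) (K : ℕ) :
    ∀ n ξ, histExp S (fun ζ => if nontrivCount ζ ≤ K then v (lastBelief μ ζ) else 0) n ξ
      ≤ histExp (S.capCount hTF K) (fun ζ => v (lastBelief μ ζ)) n ξ := by
  intro n
  induction n with
  | zero =>
    intro ξ
    rw [histExp_zero, histExp_zero]
    by_cases hc : nontrivCount ξ ≤ K
    · rw [if_pos hc]
    · rw [if_neg hc]; exact hv0 _
  | succ n ih =>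
    intro ξ
    rcases lt_trichotomy (nontrivCount ξ) K with hlt | heq | hgt
    · have hnx : (S.capCount hTF K).next ξ = S.next ξ := if_pos hlt
      rw [histExp_succ, histExp_succ, hnx]
      exact SPExp.expect_mono fun q _ => ih _
    · have hnx : (S.capCount hTF K).next ξ = SPExp.triv (lastBelief μ ξ) :=
        if_neg (by omega)
      by_cases htr : S.next ξ ∈ Trivials Ω
      · have he2 : S.next ξ = SPExp.triv (lastBelief μ ξ) := by
          have := SPExp.eq_triv_of_mem_trivials htr
          rwa [S.bayes ξ] at this
        rw [histExp_succ, histExp_succ, hnx, he2, SPExp.expect_triv, SPExp.expect_triv]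
        exact ih _
      · rw [histExp_succ, histExp_succ, hnx]
        have hz : (fun q => histExp S
            (fun ζ => if nontrivCount ζ ≤ K then v (lastBelief μ ζ) else 0) n
            ((S.next ξ, q) :: ξ)) = fun _ => (0:ℝ) := by
          refine funext fun q => histExp_capzero n _ ?_
          rw [nontrivCount_cons, if_neg htr]; omega
        rw [hz, SPExp.expect_const]
        exact SPExp.le_expect fun q => le_histExp (fun ζ => hv0 _) n _
    · rw [histExp_capzero (n+1) ξ hgt]
      exact le_histExp (fun ζ => hv0 _) (n+1) ξ

lemma cap_le_vN (hTF : Trivials Ω ⊆ F) (hvhi : ∀ p, v p ≤ Vhi)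
    (S : SeqP F μ) (K : ℕ) :
    ∀ n ξ, histExp (S.capCount hTF K) (fun ζ => v (lastBelief μ ζ)) n ξ
      ≤ vN F v (K - nontrivCount ξ) (lastBelief μ ξ) := by
  intro n
  induction n with
  | zero =>
    intro ξ
    rw [histExp_zero, ← vN_zero (v := v) hTF (lastBelief μ ξ)]
    exact vN_mono hTF hvhi (Nat.zero_le _) _
  | succ n ih =>
    intro ξ
    by_cases hlt : nontrivCount ξ < K
    · have hnx : (S.capCount hTF K).next ξ = S.next ξ := if_pos hlt
      by_cases htr : S.next ξ ∈ Trivials Ω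
      · have he2 : S.next ξ = SPExp.triv (lastBelief μ ξ) := by
          have := SPExp.eq_triv_of_mem_trivials htr
          rwa [S.bayes ξ] at this
        rw [histExp_succ, hnx, he2, SPExp.expect_triv]
        have := ih ((SPExp.triv (lastBelief μ ξ), lastBelief μ ξ) :: ξ)
        rw [nontrivCount_cons] at this
        have htr2 : SPExp.triv (lastBelief μ ξ) ∈ Trivials Ω := ⟨_, rfl⟩
        simp only [htr2, ↓reduceIte, Nat.add_zero] at this; exact this
      · rw [histExp_succ, hnx]
        have hstep : (S.next ξ).expect (fun q => histExp (S.capCount hTF K)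
            (fun ζ => v (lastBelief μ ζ)) n ((S.next ξ, q) :: ξ))
            ≤ (S.next ξ).expect (vN F v (K - nontrivCount ξ - 1)) := by
          refine SPExp.expect_mono fun q _ => ?_
          have := ih ((S.next ξ, q) :: ξ)
          rw [nontrivCount_cons, if_neg htr] at this
          simpa [Nat.sub_sub, lastBelief] using this
        refine le_trans hstep ?_
        have hKq : K - nontrivCount ξ - 1 + 1 = K - nontrivCount ξ := by omega
        have := expect_vN_le hTF hvhi (S.feasible ξ) (S.bayes ξ)
          (n := K - nontrivCount ξ - 1)
        rwa [hKq] at this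
    · have hnx : (S.capCount hTF K).next ξ = SPExp.triv (lastBelief μ ξ) :=
        if_neg hlt
      rw [histExp_succ, hnx, SPExp.expect_triv]
      have := ih ((SPExp.triv (lastBelief μ ξ), lastBelief μ ξ) :: ξ)
      rw [nontrivCount_cons] at this
      have htr : SPExp.triv (lastBelief μ ξ) ∈ Trivials Ω := ⟨_, rfl⟩
      simp only [htr, ↓reduceIte, Nat.add_zero] at this; exact this

end Cap

section Unif
variable {Ω : Type*} [Fintype Ω] [Nonempty Ω] {F : Set (SPExp Ω)}
variable {v : Belief Ω → ℝ} {Vlo Vhi : ℝ}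

/-- Uniform bound: any strategy's m-step value is within ε(K) of the K-step optimum. -/
lemma stepUtility_le_vN_K (hTF : Trivials Ω ⊆ F) (hVlo : 0 < Vlo)
    (hvlo : ∀ p, Vlo ≤ v p) (hvhi : ∀ p, v p ≤ Vhi)
    {δ : ℝ} (hδ : 0 < δ) (hA2 : Assumption2 F δ)
    {p : Belief Ω} (S : SeqP F p) (m K : ℕ) :
    stepUtility v S m ≤ vN F v K p
      + Vhi * Real.log (Fintype.card Ω) / (δ * (K + 1)) := by
  have hVhi0 : 0 < Vhi := lt_of_lt_of_le hVlo (le_trans (hvlo default) (hvhi default))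
  have hv0 : ∀ q, 0 ≤ v q := fun q => le_trans (le_of_lt hVlo) (hvlo q)
  set c : ℝ := Vhi / (δ * (K + 1)) with hc
  have hc0 : 0 ≤ c := by positivity
  -- pointwise bound
  have hpt : ∀ ζ : Hist Ω, v (lastBelief p ζ)
      ≤ (if nontrivCount ζ ≤ K then v (lastBelief p ζ) else 0)
        + c * (δ * nontrivCount ζ) := by
    intro ζ
    by_cases hK : nontrivCount ζ ≤ K
    · rw [if_pos hK]
      have : 0 ≤ c * (δ * nontrivCount ζ) := by positivity
      linarith
    · rw [if_neg hK]
      have hK1 : (K : ℝ) + 1 ≤ (nontrivCount ζ : ℝ) := by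
        exact_mod_cast Nat.succ_le_of_lt (Nat.lt_of_not_le hK)
      have hd : c * (δ * (K + 1)) = Vhi := by
        rw [hc]; field_simp
      have : Vhi ≤ c * (δ * nontrivCount ζ) := by
        rw [← hd]
        refine mul_le_mul_of_nonneg_left ?_ hc0
        exact mul_le_mul_of_nonneg_left hK1 (le_of_lt hδ)
      linarith [hvhi (lastBelief p ζ)]
  have h1 : stepUtility v S m
      ≤ histExp S (fun ζ => (if nontrivCount ζ ≤ K then v (lastBelief p ζ) else 0)
          + c * (δ * nontrivCount ζ)) m [] :=
    histExp_mono hpt m []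
  rw [histExp_add] at h1
  have h2 : histExp S (fun ζ => c * (δ * nontrivCount ζ)) m []
      ≤ c * Real.log (Fintype.card Ω) := by
    rw [histExp_smul]
    refine mul_le_mul_of_nonneg_left ?_ hc0
    exact le_trans (histExp_count_le hδ hA2 S m) (entropy_le_log p)
  have h3 : histExp S (fun ζ => if nontrivCount ζ ≤ K then v (lastBelief p ζ) else 0) m []
      ≤ vN F v K p := by
    refine le_trans (histExp_le_cap hTF hv0 S K m []) ?_
    have h4 := cap_le_vN hTF hvhi S K m []
    rw [nontrivCount_nil, Nat.sub_zero] at h4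
    exact h4
  have hcc : c * Real.log (Fintype.card Ω)
      = Vhi * Real.log (Fintype.card Ω) / (δ * (K + 1)) := by
    rw [hc]; ring
  rw [hcc] at h2
  unfold stepUtility at h1 ⊢
  linarith

end Unif

section VInfRel
variable {Ω : Type*} [Fintype Ω] [Nonempty Ω] {F : Set (SPExp Ω)}
variable {v : Belief Ω → ℝ} {Vlo Vhi : ℝ}

lemma gterm_le {μ : Belief Ω} (hVlo : 0 < Vlo) (hvlo : ∀ p, Vlo ≤ v p)
    (hvhi : ∀ p, v p ≤ Vhi) (S : SeqP F μ) (ζ : Hist Ω) :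
    (if TerminatesAfter S ζ then v (lastBelief μ ζ) else 0) ≤ Vhi := by
  split
  · exact hvhi _
  · linarith [le_trans (le_of_lt hVlo) (le_trans (hvlo default) (hvhi default))]

lemma infUtility_le (hVlo : 0 < Vlo) (hvlo : ∀ p, Vlo ≤ v p) (hvhi : ∀ p, v p ≤ Vhi)
    {μ : Belief Ω} (S : SeqP F μ) : infUtility v S ≤ Vhi :=
  ciSup_le fun n => histExp_le (gterm_le hVlo hvlo hvhi S) n []

lemma bddAbove_infU (hVlo : 0 < Vlo) (hvlo : ∀ p, Vlo ≤ v p) (hvhi : ∀ p, v p ≤ Vhi)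
    {μ : Belief Ω} : BddAbove (Set.range fun S : SeqP F μ => infUtility v S) := by
  refine ⟨Vhi, ?_⟩
  rintro x ⟨S, rfl⟩
  exact infUtility_le hVlo hvlo hvhi S

lemma vInf_le_vN_K (hTF : Trivials Ω ⊆ F) (hVlo : 0 < Vlo)
    (hvlo : ∀ p, Vlo ≤ v p) (hvhi : ∀ p, v p ≤ Vhi)
    {δ : ℝ} (hδ : 0 < δ) (hA2 : Assumption2 F δ) (p : Belief Ω) (K : ℕ) :
    vInf F v p ≤ vN F v K p + Vhi * Real.log (Fintype.card Ω) / (δ * (K + 1)) := by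
  have hne := seqP_nonempty hTF p
  have hv0 : ∀ q, 0 ≤ v q := fun q => le_trans (le_of_lt hVlo) (hvlo q)
  refine ciSup_le fun S => ?_
  refine ciSup_le fun n => ?_
  have h1 : histExp S (fun ζ => if TerminatesAfter S ζ then v (lastBelief p ζ) else 0) n []
      ≤ stepUtility v S n := by
    refine histExp_mono (fun ζ => ?_) n []
    split
    · exact le_refl _
    · exact hv0 _
  exact le_trans h1 (stepUtility_le_vN_K hTF hVlo hvlo hvhi hδ hA2 S n K)

lemma lastBelief_padHist (μ : Belief Ω) (ζ : Hist Ω) (l : ℕ) :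
    lastBelief μ (padHist μ ζ l) = lastBelief μ ζ := by
  cases l with
  | zero => rfl
  | succ l => rfl

lemma length_padHist (μ : Belief Ω) (ζ : Hist Ω) (l : ℕ) :
    (padHist μ ζ l).length = l + ζ.length := by
  unfold padHist
  rw [List.length_append, List.length_replicate]

lemma terminates_truncLen (hTF : Trivials Ω ⊆ F) {μ : Belief Ω} (S : SeqP F μ) (K : ℕ)
    (ζ : Hist Ω) (hζ : K ≤ ζ.length) : TerminatesAfter (S.truncLen hTF K) ζ := by
  intro l
  have hlen : ¬ (padHist μ ζ l).length < K := by
    rw [length_padHist]; omega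
  show (if (padHist μ ζ l).length < K then S.next (padHist μ ζ l)
    else SPExp.triv (lastBelief μ (padHist μ ζ l))) = SPExp.triv (lastBelief μ ζ)
  rw [if_neg hlen, lastBelief_padHist]

lemma vN_le_vInf (hTF : Trivials Ω ⊆ F) (hVlo : 0 < Vlo)
    (hvlo : ∀ p, Vlo ≤ v p) (hvhi : ∀ p, v p ≤ Vhi) (p : Belief Ω) (K : ℕ) :
    vN F v K p ≤ vInf F v p := by
  have hne := seqP_nonempty hTF p
  refine ciSup_le fun S => ?_
  set S' := S.truncLen hTF K with hS'
  have h1 : stepUtility v S K = stepUtility v S' K := stepUtility_trunc hTF S K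
  have h2 : stepUtility v S' K
      = histExp S' (fun ζ => if TerminatesAfter S' ζ then v (lastBelief p ζ) else 0) K [] := by
    refine histExp_congr_g K [] (fun ζ hζ => ?_)
    rw [if_pos (terminates_truncLen hTF S K ζ (by omega))]
  have h3 : histExp S' (fun ζ => if TerminatesAfter S' ζ then v (lastBelief p ζ) else 0) K []
      ≤ infUtility v S' := by
    refine le_ciSup (f := fun n => histExp S'
      (fun ζ => if TerminatesAfter S' ζ then v (lastBelief p ζ) else 0) n []) ?_ K
    refine ⟨Vhi, ?_⟩
    rintro x ⟨n, rfl⟩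
    exact histExp_le (gterm_le hVlo hvlo hvhi S') n []
  have h4 : infUtility v S' ≤ vInf F v p :=
    le_ciSup (bddAbove_infU hVlo hvlo hvhi) S'
  linarith

end VInfRel

section USC
variable {Ω : Type*} [Fintype Ω] [Nonempty Ω] {F : Set (SPExp Ω)}
variable {v : Belief Ω → ℝ} {Vlo Vhi : ℝ}

lemma vN_usc (hTF : Trivials Ω ⊆ F) (hVlo : 0 < Vlo)
    (hvlo : ∀ p, Vlo ≤ v p) (hvhi : ∀ p, v p ≤ Vhi)
    (husc : UpperSemicontinuous v) {h : ℕ} (hA1 : Assumption1 F h) :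
    ∀ n, UpperSemicontinuous (vN F v n) := by
  have hh1 : 1 ≤ h := by
    have := hA1.1 (SPExp.triv default) (hTF ⟨default, rfl⟩)
    have hcard : (SPExp.triv (default : Belief Ω)).tau.card = 1 := by
      show (Finsupp.single (default : Belief Ω) (1:ℝ)).support.card = 1
      rw [Finsupp.support_single_ne_zero _ one_ne_zero]
      rfl
    omega
  intro n
  induction n with
  | zero =>
    have hv0 : vN F v 0 = v := funext fun p => vN_zero hTF p
    rwa [hv0]
  | succ n IH =>
    intro p y hy
    by_contra hcon
    rw [Filter.not_eventually] at hcon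
    have hNB : (𝓝 p ⊓ 𝓟 {q : Belief Ω | ¬ vN F v (n+1) q < y}).NeBot :=
      Filter.frequently_iff_neBot.1 hcon
    obtain ⟨q, hq⟩ := Filter.exists_seq_tendsto (𝓝 p ⊓ 𝓟 {q : Belief Ω | ¬ vN F v (n+1) q < y})
    have hq1 : Tendsto q atTop (𝓝 p) := hq.mono_right inf_le_left
    have hq2 : ∀ᶠ i in atTop, y ≤ vN F v (n+1) (q i) := by
      have h2 := hq.mono_right inf_le_right
      rw [tendsto_principal] at h2
      exact h2.mono fun i hi => not_lt.1 hi
    have hSiex : ∀ i : ℕ, ∃ S : SeqP F (q i),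
        vN F v (n+1) (q i) - 1/(i+1) < stepUtility v S (n+1) := by
      intro i
      have hne := seqP_nonempty hTF (q i)
      exact exists_lt_of_lt_ciSup (sub_lt_self _ (by positivity))
    choose Si hSi using hSiex
    set e : ℕ → SPExp Ω := fun i => (Si i).next [] with he_def
    have heF : ∀ i, e i ∈ F := fun i => (Si i).feasible []
    have heσ : ∀ i, (e i).sigma = q i := fun i => (Si i).bayes []
    have hBle : ∀ i, stepUtility v (Si i) (n+1) ≤ (e i).expect (vN F v n) :=
      fun i => stepUtility_succ_le hvhi (Si i) n
    have htup : ∀ i, ∃ lam : Fin h → ℝ, ∃ qq : Fin h → Belief Ω,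
        (∀ j, 0 ≤ lam j) ∧ (∑ j, lam j = 1) ∧ (∀ j, lam j ≤ 1) ∧
        ∀ f : Belief Ω → ℝ, (e i).expect f = ∑ j, lam j * f (qq j) :=
      fun i => SPExp.exists_tuple (e i) (hA1.1 _ (heF i)) default
    choose lam qq hlam0 hlam1 hlamle hexp using htup
    have hKc : IsCompact ((Set.univ.pi fun _ : Fin h => Set.Icc (0:ℝ) 1) ×ˢ
        (Set.univ : Set (Fin h → Belief Ω))) :=
      (isCompact_univ_pi fun _ => isCompact_Icc).prod isCompact_univ
    have hmemK : ∀ i, (lam i, qq i) ∈ ((Set.univ.pi fun _ : Fin h => Set.Icc (0:ℝ) 1) ×ˢ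
        (Set.univ : Set (Fin h → Belief Ω))) :=
      fun i => ⟨fun j _ => ⟨hlam0 i j, hlamle i j⟩, trivial⟩
    obtain ⟨⟨Λ, Q⟩, -, φ, hφmono, hφtend⟩ := hKc.tendsto_subseq hmemK
    have hΛt : ∀ j, Tendsto (fun i => lam (φ i) j) atTop (𝓝 (Λ j)) := by
      intro j
      have h1 : Tendsto (fun i => lam (φ i)) atTop (𝓝 Λ) :=
        (continuous_fst.tendsto _).comp hφtend
      exact (tendsto_pi_nhds.1 h1) j
    have hQt : ∀ j, Tendsto (fun i => qq (φ i) j) atTop (𝓝 (Q j)) := by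
      intro j
      have h1 : Tendsto (fun i => qq (φ i)) atTop (𝓝 Q) :=
        (continuous_snd.tendsto _).comp hφtend
      exact (tendsto_pi_nhds.1 h1) j
    have hΛ0 : ∀ j, 0 ≤ Λ j := fun j => ge_of_tendsto' (hΛt j) (fun i => hlam0 _ j)
    have hΛle : ∀ j, Λ j ≤ 1 := fun j => le_of_tendsto' (hΛt j) (fun i => hlamle _ j)
    have hΛ1 : ∑ j, Λ j = 1 := by
      have h1 : Tendsto (fun i => ∑ j, lam (φ i) j) atTop (𝓝 (∑ j, Λ j)) :=
        tendsto_finset_sum _ (fun j _ => hΛt j)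
      rw [show (fun i => ∑ j, lam (φ i) j) = fun _ => (1:ℝ) from funext fun i => hlam1 _] at h1
      exact (tendsto_nhds_unique h1 tendsto_const_nhds)
    set elim := SPExp.mkExp Λ Q hΛ0 hΛ1 with helim
    have hweak : WeakTendsto (fun i => e (φ i)) elim := by
      intro f hf
      rw [show (fun i => (e (φ i)).expect f) = fun i => ∑ j, lam (φ i) j * f (qq (φ i) j)
        from funext fun i => hexp _ f]
      rw [SPExp.mkExp_expect]
      exact tendsto_finset_sum _ fun j _ => (hΛt j).mul ((hf.tendsto _).comp (hQt j))
    have helimF : elim ∈ F := hA1.2 _ (fun i => heF _) elim hweak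
    have hσlim : elim.sigma = p := by
      apply Subtype.ext; funext ω
      have hcont : Continuous (fun r : Belief Ω => r.val ω) :=
        (continuous_apply ω).comp continuous_subtype_val
      have h1 := hweak _ hcont
      rw [show (fun i => (e (φ i)).expect fun r => r.val ω) = fun i => (q (φ i)).val ω
        from funext fun i => by rw [← SPExp.sigma_apply, heσ]] at h1
      have h3 : Tendsto (fun i => (q (φ i)).val ω) atTop (𝓝 (p.val ω)) :=
        (hcont.tendsto p).comp (hq1.comp hφmono.tendsto_atTop)
      exact tendsto_nhds_unique h1 h3
    have hyA : y ≤ elim.expect (vN F v n) := by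
      set A := elim.expect (vN F v n) with hA
      clear_value A
      by_contra hyA
      push_neg at hyA
      set ρ := (y - A) / (2 * h) with hρdef
      clear_value ρ
      have hh0 : (0:ℝ) < h := by exact_mod_cast hh1
      have hρ : 0 < ρ := by
        rw [hρdef]
        have : 0 < y - A := by linarith
        positivity
      have hterm : ∀ j : Fin h, ∀ᶠ i in atTop,
          lam (φ i) j * vN F v n (qq (φ i) j) < Λ j * vN F v n (Q j) + ρ := by
        intro j
        by_cases hΛj : Λ j = 0
        · have h1 : Tendsto (fun i => lam (φ i) j * Vhi) atTop (𝓝 (Λ j * Vhi)) :=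
            (hΛt j).mul_const Vhi
          rw [hΛj, zero_mul] at h1
          have h2 := h1.eventually_lt_const hρ
          refine h2.mono fun i hi => ?_
          have h3 : lam (φ i) j * vN F v n (qq (φ i) j) ≤ lam (φ i) j * Vhi :=
            mul_le_mul_of_nonneg_left (vN_le hTF hvhi n _) (hlam0 _ j)
          rw [hΛj, zero_mul, zero_add]
          linarith
        · set c' := vN F v n (Q j) + ρ/2 with hc'
          clear_value c'
          have hev2 : ∀ᶠ i in atTop, vN F v n (qq (φ i) j) < c' :=
            (hQt j).eventually (IH (Q j) c' (by rw [hc']; linarith))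
          have hlim : Λ j * c' < Λ j * vN F v n (Q j) + ρ := by
            have hΛjpos : 0 < Λ j := lt_of_le_of_ne (hΛ0 j) (Ne.symm hΛj)
            have h4 : Λ j * c' = Λ j * vN F v n (Q j) + Λ j * (ρ/2) := by
              rw [hc']; ring
            have h5 : Λ j * (ρ/2) ≤ ρ/2 := by
              have := hΛle j
              nlinarith
            linarith
          have hev3 : ∀ᶠ i in atTop, lam (φ i) j * c' < Λ j * vN F v n (Q j) + ρ :=
            ((hΛt j).mul_const c').eventually_lt_const hlim
          refine (hev2.and hev3).mono fun i ⟨hi2, hi3⟩ => ?_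
          have h6 : lam (φ i) j * vN F v n (qq (φ i) j) ≤ lam (φ i) j * c' :=
            mul_le_mul_of_nonneg_left (le_of_lt hi2) (hlam0 _ j)
          linarith
      have hallj : ∀ᶠ i in atTop, ∀ j : Fin h,
          lam (φ i) j * vN F v n (qq (φ i) j) < Λ j * vN F v n (Q j) + ρ :=
        Filter.eventually_all.2 hterm
      have hsum : ∀ᶠ i in atTop, (e (φ i)).expect (vN F v n) < A + (y - A)/2 := by
        refine hallj.mono fun i hi => ?_
        rw [hexp _ (vN F v n)]
        have hne : (Finset.univ : Finset (Fin h)).Nonempty := by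
          have : Nonempty (Fin h) := ⟨⟨0, by omega⟩⟩
          exact Finset.univ_nonempty
        have h7 : ∑ j, lam (φ i) j * vN F v n (qq (φ i) j)
            < ∑ j, (Λ j * vN F v n (Q j) + ρ) :=
          Finset.sum_lt_sum_of_nonempty hne fun j _ => hi j
        have h8 : ∑ j, (Λ j * vN F v n (Q j) + ρ) = A + h * ρ := by
          rw [Finset.sum_add_distrib, Finset.sum_const, Finset.card_univ,
            Fintype.card_fin, nsmul_eq_mul, hA, helim, SPExp.mkExp_expect]
        have h9 : (h:ℝ) * ρ = (y - A)/2 := by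
          rw [hρdef]; field_simp
        rw [h8, h9] at h7
        exact h7
      have hy2 : ∀ᶠ i in atTop, y ≤ vN F v (n+1) (q (φ i)) :=
        hφmono.tendsto_atTop.eventually hq2
      have hlow : ∀ᶠ i in atTop, y - 1/((φ i : ℝ)+1) < (e (φ i)).expect (vN F v n) := by
        refine hy2.mono fun i hi => ?_
        have h10 := hSi (φ i)
        have h11 := hBle (φ i)
        have : vN F v (n+1) (q (φ i)) - 1/((φ i : ℝ)+1) < (e (φ i)).expect (vN F v n) := by
          exact lt_of_lt_of_le h10 h11
        linarith
      have hsmall : ∀ᶠ i in atTop, 1/((φ i : ℝ)+1) < (y - A)/2 := by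
        have h12 : Tendsto (fun i => 1/((φ i : ℝ)+1)) atTop (𝓝 0) :=
          tendsto_one_div_add_atTop_nhds_zero_nat.comp hφmono.tendsto_atTop
        exact h12.eventually_lt_const (by linarith)
      obtain ⟨i, ⟨hi1, hi2⟩, hi3⟩ := ((hsum.and hlow).and hsmall).exists
      linarith
    have hfin : elim.expect (vN F v n) ≤ vN F v (n+1) p :=
      expect_vN_le hTF hvhi helimF hσlim n
    linarith

end USC

end AuxProof

/-- Lemma 6 (lem-upper-semicont), second part: under Assumptions 1 and 2, v_∞ is
upper semicontinuous. -/
theorem lem_upper_semicont_vInf {Ω : Type*} [Fintype Ω] [Nonempty Ω]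
    (F : Set (SPExp Ω)) (hTF : Trivials Ω ⊆ F)
    (v : Belief Ω → ℝ) (Vlo Vhi : ℝ) (hVlo : 0 < Vlo) (hVV : Vlo ≤ Vhi)
    (hvlo : ∀ p, Vlo ≤ v p) (hvhi : ∀ p, v p ≤ Vhi)
    (husc : UpperSemicontinuous v)
    (h : ℕ) (hA1 : Assumption1 F h)
    (δ : ℝ) (hδ : 0 < δ) (hA2 : Assumption2 F δ) :
    UpperSemicontinuous (vInf F v) := by
  intro p y hy
  set t := y - vInf F v p with ht
  have ht0 : 0 < t := by rw [ht]; linarith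
  have htend : Tendsto (fun K : ℕ =>
      Vhi * Real.log (Fintype.card Ω) / (δ * (K + 1))) atTop (𝓝 0) := by
    have heq : (fun K : ℕ => Vhi * Real.log (Fintype.card Ω) / (δ * (K + 1)))
        = fun K : ℕ => (Vhi * Real.log (Fintype.card Ω) / δ) * (1 / (K + 1)) := by
      funext K
      field_simp
    rw [heq]
    simpa using tendsto_one_div_add_atTop_nhds_zero_nat.const_mul
      (Vhi * Real.log (Fintype.card Ω) / δ)
  obtain ⟨K, hK⟩ := (htend.eventually_lt_const (by linarith : (0:ℝ) < t / 2)).exists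
  set εK := Vhi * Real.log (Fintype.card Ω) / (δ * (K + 1)) with hεK
  have h1 : vN F v K p ≤ vInf F v p := vN_le_vInf hTF hVlo hvlo hvhi p K
  have h2 : vN F v K p < y - εK := by
    have : vInf F v p = y - t := by rw [ht]; ring
    rw [this] at h1
    linarith
  have hev := vN_usc hTF hVlo hvlo hvhi husc hA1 K p (y - εK) h2
  refine hev.mono fun q hq => ?_
  have h3 := vInf_le_vN_K hTF hVlo hvlo hvhi hδ hA2 q K
  rw [← hεK] at h3
  linarith
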